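/- Let a ∈ (0,1) and let P and ψ be independent real random variables on a probability space such that ψ ∈ (0,1) almost surely with log ψ integrable, P ∈ (0,1] almost surely, and min(1, aP + (1−a)ψ) has the same distribution as P. Then log P is integrable and E[log ψ] ≤ E[log P] ≤ log( a + (1−a) E[ψ] ). -/

import Mathlib

open MeasureTheory ProbabilityTheory

/-- Control of the adaptive log-survival term: if `a ∈ (0,1)`, `P` and `ψ` are
independent random variables with `ψ ∈ (0,1)` a.s., `log ψ` integrable,
`P ∈ (0,1]` a.s., and `min(1, aP + (1-a)ψ)` has the same law as `P`
(stationarity), then `log P` is integrable and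
`E[log ψ] ≤ E[log P] ≤ log(a + (1-a) E[ψ])`. -/
theorem adaptive_log_survival_control {Ω : Type*} [MeasurableSpace Ω]
    (μ : Measure Ω) [IsProbabilityMeasure μ]
    (a : ℝ) (ha : a ∈ Set.Ioo (0 : ℝ) 1)
    (P ψ : Ω → ℝ) (hPm : Measurable P) (hψm : Measurable ψ)
    (hindep : IndepFun P ψ μ)
    (hψ01 : ∀ᵐ ω ∂μ, ψ ω ∈ Set.Ioo (0 : ℝ) 1)
    (hlogψ : Integrable (fun ω => Real.log (ψ ω)) μ)
    (hP01 : ∀ᵐ ω ∂μ, P ω ∈ Set.Ioc (0 : ℝ) 1)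
    (hstat : μ.map (fun ω => min 1 (a * P ω + (1 - a) * ψ ω)) = μ.map P) :
    Integrable (fun ω => Real.log (P ω)) μ ∧
    (∫ ω, Real.log (ψ ω) ∂μ) ≤ (∫ ω, Real.log (P ω) ∂μ) ∧
    (∫ ω, Real.log (P ω) ∂μ) ≤ Real.log (a + (1 - a) * ∫ ω, ψ ω ∂μ) := by
  obtain ⟨ha0, ha1⟩ := ha
  set Q : Ω → ℝ := fun ω => min 1 (a * P ω + (1 - a) * ψ ω) with hQdef
  have hQm : Measurable Q :=
    measurable_const.min ((hPm.const_mul a).add (hψm.const_mul (1 - a)))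
  -- Q equals a P + (1-a) ψ almost everywhere, and basic bounds
  have hQ_eq : ∀ᵐ ω ∂μ, Q ω = a * P ω + (1 - a) * ψ ω := by
    filter_upwards [hψ01, hP01] with ω hψω hPω
    exact min_eq_right (by nlinarith [hψω.1, hψω.2, hPω.1, hPω.2])
  -- Integrability of log Q via the bound Q ≥ (1-a) ψ
  have hlogQ : Integrable (fun ω => Real.log (Q ω)) μ := by
    refine Integrable.mono' ((integrable_const (-Real.log (1 - a))).add hlogψ.abs)
      ((Real.measurable_log.comp hQm).aestronglyMeasurable) ?_
    filter_upwards [hψ01, hP01, hQ_eq] with ω hψω hPω hQω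
    have hQpos : 0 < Q ω := by rw [hQω]; nlinarith [hψω.1, hPω.1]
    have hQle1 : Q ω ≤ 1 := by rw [hQω]; nlinarith [hψω.1, hψω.2, hPω.1, hPω.2]
    have hlb : (1 - a) * ψ ω ≤ Q ω := by rw [hQω]; nlinarith [hPω.1]
    have h1 : Real.log (Q ω) ≤ 0 := Real.log_nonpos hQpos.le hQle1
    have h2 : Real.log ((1 - a) * ψ ω) ≤ Real.log (Q ω) :=
      Real.log_le_log (by nlinarith [hψω.1]) hlb
    rw [Real.log_mul (by linarith) (ne_of_gt hψω.1)] at h2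
    have hψneg : Real.log (ψ ω) ≤ 0 := Real.log_nonpos hψω.1.le hψω.2.le
    rw [Real.norm_eq_abs, abs_of_nonpos h1]
    simp only [Pi.add_apply]
    rw [abs_of_nonpos hψneg]
    linarith
  -- Transfer along the stationarity equation
  have hlogP : Integrable (fun ω => Real.log (P ω)) μ := by
    have h1 : Integrable Real.log (μ.map Q) :=
      (integrable_map_measure Real.measurable_log.aestronglyMeasurable
        hQm.aemeasurable).mpr hlogQ
    rw [hQdef, hstat] at h1
    exact (integrable_map_measure Real.measurable_log.aestronglyMeasurable
      hPm.aemeasurable).mp h1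
  have hint_eq : ∫ ω, Real.log (Q ω) ∂μ = ∫ ω, Real.log (P ω) ∂μ := by
    rw [← integral_map hQm.aemeasurable Real.measurable_log.aestronglyMeasurable,
      ← integral_map hPm.aemeasurable Real.measurable_log.aestronglyMeasurable,
      hQdef, hstat]
  -- Lower bound: concavity of log
  have hlow : a * ∫ ω, Real.log (P ω) ∂μ + (1 - a) * ∫ ω, Real.log (ψ ω) ∂μ
      ≤ ∫ ω, Real.log (Q ω) ∂μ := by
    rw [← integral_const_mul, ← integral_const_mul, ← integral_add
      (hlogP.const_mul a) (hlogψ.const_mul (1 - a))]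
    refine integral_mono_ae ((hlogP.const_mul a).add (hlogψ.const_mul (1 - a))) hlogQ ?_
    filter_upwards [hψ01, hP01, hQ_eq] with ω hψω hPω hQω
    have := (strictConcaveOn_log_Ioi.concaveOn.2) (Set.mem_Ioi.mpr hPω.1)
      (Set.mem_Ioi.mpr hψω.1) ha0.le (by linarith : (0:ℝ) ≤ 1 - a)
      (by ring : a + (1 - a) = 1)
    simpa [hQω, smul_eq_mul] using this
  -- integrability of P and ψ
  have hPint : Integrable P μ := by
    refine Integrable.mono' (integrable_const 1) hPm.aestronglyMeasurable ?_
    filter_upwards [hP01] with ω hω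
    rw [Real.norm_eq_abs, abs_of_pos hω.1]; exact hω.2
  have hψint : Integrable ψ μ := by
    refine Integrable.mono' (integrable_const 1) hψm.aestronglyMeasurable ?_
    filter_upwards [hψ01] with ω hω
    rw [Real.norm_eq_abs, abs_of_pos hω.1]; exact hω.2.le
  have hψpos : 0 < ∫ ω, ψ ω ∂μ := by
    have h0 : 0 ≤ᵐ[μ] ψ := by filter_upwards [hψ01] with ω hω; exact hω.1.le
    rcases lt_or_eq_of_le (integral_nonneg_of_ae h0) with h | h
    · exact h
    · exfalso
      have := (integral_eq_zero_iff_of_nonneg_ae h0 hψint).mp h.symm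
      have hc : ∀ᵐ ω ∂μ, False := by
        filter_upwards [hψ01, this] with ω hω h0ω
        exact absurd h0ω (ne_of_gt hω.1)
      exact (IsProbabilityMeasure.ne_zero μ) (by simpa using hc)
  have hPle1 : ∫ ω, P ω ∂μ ≤ 1 := by
    have := integral_mono_ae hPint (integrable_const 1)
      (by filter_upwards [hP01] with ω hω; exact hω.2)
    simpa using this
  have hPpos : 0 ≤ ∫ ω, P ω ∂μ :=
    integral_nonneg_of_ae (by filter_upwards [hP01] with ω hω; exact hω.1.le)
  set m : ℝ := a * ∫ ω, P ω ∂μ + (1 - a) * ∫ ω, ψ ω ∂μ with hm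
  have hmpos : 0 < m := by nlinarith
  -- Upper bound: Jensen via log x ≤ x - 1
  have hup : ∫ ω, Real.log (Q ω) ∂μ ≤ Real.log m := by
    have hptw : ∀ᵐ ω ∂μ, Real.log (Q ω) ≤ Real.log m + (a * P ω + (1 - a) * ψ ω) / m - 1 := by
      filter_upwards [hψ01, hP01, hQ_eq] with ω hψω hPω hQω
      have hRpos : 0 < a * P ω + (1 - a) * ψ ω := by nlinarith [hψω.1, hPω.1]
      have h1 : Real.log ((a * P ω + (1 - a) * ψ ω) / m)
          ≤ (a * P ω + (1 - a) * ψ ω) / m - 1 :=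
        Real.log_le_sub_one_of_pos (div_pos hRpos hmpos)
      rw [Real.log_div (ne_of_gt hRpos) (ne_of_gt hmpos)] at h1
      rw [hQω]; linarith
    have hRint : Integrable (fun ω => Real.log m + (a * P ω + (1 - a) * ψ ω) / m - 1) μ := by
      apply Integrable.sub _ (integrable_const 1)
      exact (integrable_const (Real.log m)).add
        (((hPint.const_mul a).add (hψint.const_mul (1 - a))).div_const m)
    calc ∫ ω, Real.log (Q ω) ∂μ
        ≤ ∫ ω, (Real.log m + (a * P ω + (1 - a) * ψ ω) / m - 1) ∂μ :=
          integral_mono_ae hlogQ hRint hptw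
      _ = Real.log m := by
          have hRm : ∫ ω, (a * P ω + (1 - a) * ψ ω) ∂μ = m := by
            rw [integral_add (hPint.const_mul a) (hψint.const_mul (1 - a)),
              integral_const_mul, integral_const_mul]
          have : (fun ω => Real.log m + (a * P ω + (1 - a) * ψ ω) / m - 1)
              = fun ω => (Real.log m - 1) + (1/m) * (a * P ω + (1 - a) * ψ ω) := by
            funext ω; field_simp; ring
          have hI2 : Integrable (fun ω => 1/m * (a * P ω + (1 - a) * ψ ω)) μ :=
            ((hPint.const_mul a).add (hψint.const_mul (1 - a))).const_mul (1/m)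
          rw [this, integral_add (integrable_const _) hI2,
            integral_const_mul, hRm, integral_const]
          simp only [measure_univ, probReal_univ, one_smul, smul_eq_mul]
          field_simp
          ring
  refine ⟨hlogP, ?_, ?_⟩
  · have h1 := hlow
    rw [hint_eq] at h1
    nlinarith [h1]
  · rw [← hint_eq] at *
    refine le_trans hup (Real.log_le_log hmpos ?_)
    nlinarith
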